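/- Let Λ and Λ' be lattices in ℝ² and let Φ : ℝ² → ℝ² be an affine automorphism, Φ(x) = Ax + b, with Φ(Λ) ⊆ Λ', and set Λ'' := A(Λ) ⊆ Λ'. Then for every y ∈ ℝ² with y ∉ Λ', the preimage Φ⁻¹(Γ_{Λ'}·y) is a union of Γ_Λ-orbits, and the set of Γ_Λ-orbits contained in Φ⁻¹(Γ_{Λ'}·y) is finite with cardinality equal to the index of Λ'' in Λ'. -/

import Mathlib

/-- The plane ℝ². -/
abbrev V2 : Type := EuclideanSpace ℝ (Fin 2)

/-- `Λ` is a lattice in ℝ²: a discrete additive subgroup spanning ℝ². -/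
def IsLattice (Λ : AddSubgroup V2) : Prop :=
  DiscreteTopology Λ ∧ Submodule.span ℝ (Λ : Set V2) = ⊤

/-- The `Γ_Λ`-orbit of `x`: the set `{2λ + x : λ ∈ Λ} ∪ {2λ − x : λ ∈ Λ}`. -/
def orbitG (Λ : AddSubgroup V2) (x : V2) : Set V2 :=
  {y : V2 | ∃ l ∈ Λ, y = (2:ℝ) • l + x ∨ y = (2:ℝ) • l - x}

lemma mem_orbit_self (Λ : AddSubgroup V2) (x : V2) : x ∈ orbitG Λ x :=
  ⟨0, Λ.zero_mem, Or.inl (by simp)⟩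

lemma neg_mem_orbit (Λ : AddSubgroup V2) (x : V2) : -x ∈ orbitG Λ x :=
  ⟨0, Λ.zero_mem, Or.inr (by simp)⟩

lemma orbit_trans {Λ : AddSubgroup V2} {x x' z : V2} (hz : z ∈ orbitG Λ x')
    (hx' : x' ∈ orbitG Λ x) : z ∈ orbitG Λ x := by
  obtain ⟨l', hl', hz⟩ := hz
  obtain ⟨l, hl, hx'⟩ := hx'
  rcases hz with hz | hz <;> rcases hx' with hx' | hx'
  · exact ⟨l' + l, Λ.add_mem hl' hl, Or.inl (by rw [hz, hx']; module)⟩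
  · exact ⟨l' + l, Λ.add_mem hl' hl, Or.inr (by rw [hz, hx']; module)⟩
  · exact ⟨l' - l, Λ.sub_mem hl' hl, Or.inr (by rw [hz, hx']; module)⟩
  · exact ⟨l' - l, Λ.sub_mem hl' hl, Or.inl (by rw [hz, hx']; module)⟩

lemma orbit_symm {Λ : AddSubgroup V2} {x x' : V2} (h : x' ∈ orbitG Λ x) :
    x ∈ orbitG Λ x' := by
  obtain ⟨l, hl, h⟩ := h
  rcases h with h | h
  · exact ⟨-l, Λ.neg_mem hl, Or.inl (by rw [h]; module)⟩
  · exact ⟨l, hl, Or.inr (by rw [h]; module)⟩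

lemma orbit_eq {Λ : AddSubgroup V2} {x x' : V2} (h : x' ∈ orbitG Λ x) :
    orbitG Λ x' = orbitG Λ x :=
  Set.ext fun _ => ⟨fun hz => orbit_trans hz h, fun hz => orbit_trans hz (orbit_symm h)⟩

open Submodule in
lemma aux_index_ne_zero (Λ' H : AddSubgroup V2)
    (hd' : DiscreteTopology Λ') (hs' : Submodule.span ℝ (Λ' : Set V2) = ⊤)
    (hsH : Submodule.span ℝ (H : Set V2) = ⊤) (hHle : H ≤ Λ') :
    (H.addSubgroupOf Λ').index ≠ 0 := by
  have hdH : DiscreteTopology H := by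
    have : DiscreteTopology (Λ' : Set V2) := hd'
    exact DiscreteTopology.of_subset this hHle
  let L' : Submodule ℤ V2 := AddSubgroup.toIntSubmodule Λ'
  let LH : Submodule ℤ V2 := AddSubgroup.toIntSubmodule H
  have hdL' : DiscreteTopology L' := hd'
  have hdLH : DiscreteTopology LH := hdH
  have hzL' : IsZLattice ℝ L' := ⟨hs'⟩
  have hzLH : IsZLattice ℝ LH := ⟨hsH⟩
  have hfin : Module.Finite ℤ L' := ZLattice.module_finite ℝ L'
  have hfree : Module.Free ℤ L' := ZLattice.module_free ℝ L'
  have hfinH : Module.Finite ℤ LH := ZLattice.module_finite ℝ LH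
  have hfreeH : Module.Free ℤ LH := ZLattice.module_free ℝ LH
  have hrk : Module.finrank ℤ L' = 2 := by rw [ZLattice.rank ℝ L']; simp
  have hrkH : Module.finrank ℤ LH = 2 := by rw [ZLattice.rank ℝ LH]; simp
  have e' : L' ≃ₗ[ℤ] (Fin 2 → ℤ) := by
    let b := Module.Free.chooseBasis ℤ L'
    have hc : Fintype.card (Module.Free.ChooseBasisIndex ℤ L') = 2 := by
      rw [← Module.finrank_eq_card_chooseBasisIndex, hrk]
    exact (b.reindex (Fintype.equivFinOfCardEq hc)).equivFun
  have eH : LH ≃ₗ[ℤ] (Fin 2 → ℤ) := by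
    let b := Module.Free.chooseBasis ℤ LH
    have hc : Fintype.card (Module.Free.ChooseBasisIndex ℤ LH) = 2 := by
      rw [← Module.finrank_eq_card_chooseBasisIndex, hrkH]
    exact (b.reindex (Fintype.equivFinOfCardEq hc)).equivFun
  have c1 : (Λ' : Type) ≃+ L' :=
    { toFun := fun x => ⟨x.1, x.2⟩, invFun := fun x => ⟨x.1, x.2⟩,
      left_inv := fun x => rfl, right_inv := fun x => rfl,
      map_add' := fun x y => rfl }
  have cH : (H : Type) ≃+ LH :=
    { toFun := fun x => ⟨x.1, x.2⟩, invFun := fun x => ⟨x.1, x.2⟩,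
      left_inv := fun x => rfl, right_inv := fun x => rfl,
      map_add' := fun x y => rfl }
  have c : (Λ' : Type) ≃+ (Fin 2 → ℤ) := c1.trans e'.toAddEquiv
  set K := H.addSubgroupOf Λ' with hK
  have hidx : (K.map c.toAddMonoidHom).index = K.index := by
    apply AddSubgroup.index_map_eq
    · exact c.surjective
    · intro x hx
      simp only [AddMonoidHom.mem_ker] at hx
      have : x = 0 := by
        have := c.injective (a₁ := x) (a₂ := 0) (by simpa using hx)
        simpa using this
      rw [this]; exact K.zero_mem
  have hKH : (K : Type) ≃+ (Fin 2 → ℤ) :=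
    (AddSubgroup.addSubgroupOfEquivOfLe hHle).trans (cH.trans eH.toAddEquiv)
  have : Nonempty ((K.map c.toAddMonoidHom : Type) ≃+ (Fin 2 → ℤ)) :=
    ⟨((c.addSubgroupMap K).symm.trans hKH)⟩
  rw [← hidx]
  exact Int.addSubgroup_index_ne_zero_iff.mpr this


/-- Let `Λ, Λ'` be lattices in ℝ², let `Φ(x) = A x + b` be an affine automorphism with
`Φ(Λ) ⊆ Λ'`, and let `Λ'' = A(Λ)` (realized as the additive subgroup `H ≤ Λ'`).  Then for
every `y ∉ Λ'`, the preimage `Φ⁻¹(Γ_{Λ'}·y)` is a union of `Γ_Λ`-orbits, and the set of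
`Γ_Λ`-orbits contained in it is finite, of cardinality the index of `Λ''` in `Λ'`. -/
theorem preimage_of_orbit_is_union_of_orbits
    (Λ Λ' : AddSubgroup V2) (hΛ : IsLattice Λ) (hΛ' : IsLattice Λ')
    (A : V2 ≃ₗ[ℝ] V2) (b : V2) (Φ : V2 → V2) (hΦ : Φ = fun x => A x + b)
    (hsub : Φ '' (Λ : Set V2) ⊆ (Λ' : Set V2))
    (H : AddSubgroup V2) (hH : (H : Set V2) = ⇑A '' (Λ : Set V2)) (hHle : H ≤ Λ')
    (y : V2) (hy : y ∉ Λ') :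
    (∀ x : V2, Φ x ∈ orbitG Λ' y → orbitG Λ x ⊆ Φ ⁻¹' (orbitG Λ' y)) ∧
    {O : Set V2 | (∃ x : V2, O = orbitG Λ x) ∧ O ⊆ Φ ⁻¹' (orbitG Λ' y)}.Finite ∧
    {O : Set V2 | (∃ x : V2, O = orbitG Λ x) ∧ O ⊆ Φ ⁻¹' (orbitG Λ' y)}.ncard
      = (H.addSubgroupOf Λ').index := by
  subst hΦ
  have hb : b ∈ Λ' := by simpa using hsub ⟨0, Λ.zero_mem, rfl⟩
  have hA : ∀ l ∈ Λ, A l ∈ Λ' := by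
    intro l hl
    have h1 : A l + b ∈ Λ' := hsub ⟨l, hl, rfl⟩
    simpa using Λ'.sub_mem h1 hb
  have hAH : ∀ l ∈ Λ, A l ∈ H := by
    intro l hl
    show A l ∈ (H : Set V2)
    rw [hH]; exact ⟨l, hl, rfl⟩
  -- Part 1
  have P1 : ∀ x : V2, (fun x => A x + b) x ∈ orbitG Λ' y →
      orbitG Λ x ⊆ (fun x => A x + b) ⁻¹' (orbitG Λ' y) := by
    intro x hx z hz
    obtain ⟨m, hm, hxm⟩ := hx
    obtain ⟨l, hl, hzl⟩ := hz
    simp only [Set.mem_preimage, Set.mem_setOf_eq] at hxm ⊢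
    rcases hzl with h1 | h1 <;> rcases hxm with h2 | h2 <;> rw [h1]
    · exact ⟨A l + m, Λ'.add_mem (hA l hl) hm, Or.inl (by
        rw [map_add, map_smul]; linear_combination (norm := module) h2)⟩
    · exact ⟨A l + m, Λ'.add_mem (hA l hl) hm, Or.inr (by
        rw [map_add, map_smul]; linear_combination (norm := module) h2)⟩
    · exact ⟨A l - m + b, Λ'.add_mem (Λ'.sub_mem (hA l hl) hm) hb, Or.inr (by
        rw [map_sub, map_smul]; linear_combination (norm := module) -h2)⟩
    · exact ⟨A l - m + b, Λ'.add_mem (Λ'.sub_mem (hA l hl) hm) hb, Or.inl (by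
        rw [map_sub, map_smul]; linear_combination (norm := module) -h2)⟩
  refine ⟨P1, ?_⟩
  -- the family of orbits
  set xx : ↥Λ' → V2 := fun m => A.symm ((2:ℝ) • (m : V2) + y - b) with hxx
  set g : ↥Λ' → Set V2 := fun m => orbitG Λ (xx m) with hg
  set S : Set (Set V2) :=
    {O : Set V2 | (∃ x : V2, O = orbitG Λ x) ∧ O ⊆ (fun x => A x + b) ⁻¹' (orbitG Λ' y)}
    with hSdef
  have hAxx : ∀ m : ↥Λ', A (xx m) = (2:ℝ) • (m : V2) + y - b :=
    fun m => A.apply_symm_apply _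
  have hgS : ∀ m, g m ∈ S := by
    intro m
    refine ⟨⟨xx m, rfl⟩, P1 _ ⟨(m : V2), m.2, Or.inl ?_⟩⟩
    show A (xx m) + b = (2:ℝ) • (m : V2) + y
    rw [hAxx m]; module
  have hg_eq : ∀ m m' : ↥Λ', (m : V2) - (m' : V2) ∈ H → g m = g m' := by
    intro m m' hmm
    have : ((m : V2) - m') ∈ (H : Set V2) := hmm
    rw [hH] at this
    obtain ⟨l, hl, hal⟩ := this
    refine orbit_eq ⟨l, hl, Or.inl ?_⟩
    apply A.injective
    rw [map_add, map_smul, hAxx, hAxx, hal]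
    module
  have hg_inj : ∀ m m' : ↥Λ', g m = g m' → (m : V2) - (m' : V2) ∈ H := by
    intro m m' hgmm
    have hx : xx m ∈ orbitG Λ (xx m') := by
      have h1 : orbitG Λ (xx m) = orbitG Λ (xx m') := hgmm
      rw [← h1]; exact mem_orbit_self Λ (xx m)
    obtain ⟨l, hl, hc⟩ := hx
    rcases hc with hc | hc
    · have h2 : (2:ℝ) • ((m : V2) - (m' : V2) - A l) = 0 := by
        have := congrArg A hc
        rw [map_add, map_smul, hAxx, hAxx] at this
        linear_combination (norm := module) this
      have h3 : (m : V2) - (m' : V2) = A l := by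
        have := smul_eq_zero.mp h2
        rcases this with h | h
        · norm_num at h
        · linear_combination (norm := module) h
      rw [h3]
      show A l ∈ (H : Set V2)
      rw [hH]; exact ⟨l, hl, rfl⟩
    · exfalso
      have := congrArg A hc
      rw [map_sub, map_smul, hAxx, hAxx] at this
      have h2 : (2:ℝ) • (y - (A l - (m : V2) - (m' : V2) + b)) = 0 := by
        linear_combination (norm := module) this
      have h3 : y = A l - (m : V2) - (m' : V2) + b := by
        have := smul_eq_zero.mp h2
        rcases this with h | h
        · norm_num at h
        · linear_combination (norm := module) h
      exact hy (h3 ▸ Λ'.add_mem (Λ'.sub_mem (Λ'.sub_mem (hA l hl) m.2) m'.2) hb)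
  have hS_range : S = Set.range g := by
    ext O
    constructor
    · rintro ⟨⟨x, rfl⟩, hOsub⟩
      have hx : (fun x => A x + b) x ∈ orbitG Λ' y := hOsub (mem_orbit_self Λ x)
      obtain ⟨m, hm, hc⟩ := hx
      simp only [] at hc
      rcases hc with hc | hc
      · refine ⟨⟨m, hm⟩, ?_⟩
        have : xx ⟨m, hm⟩ = x := by
          apply A.injective
          rw [hAxx]
          show (2:ℝ) • m + y - b = A x
          linear_combination (norm := module) -hc
        rw [hg]; simp only []; rw [this]
      · refine ⟨⟨b - m, Λ'.sub_mem hb hm⟩, ?_⟩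
        have : xx ⟨b - m, Λ'.sub_mem hb hm⟩ = -x := by
          apply A.injective
          rw [hAxx, map_neg]
          show (2:ℝ) • (b - m) + y - b = -(A x)
          linear_combination (norm := module) hc
        rw [hg]; simp only []; rw [this]
        exact orbit_eq (neg_mem_orbit Λ x)
    · rintro ⟨m, rfl⟩
      exact hgS m
  -- quotient
  set K := H.addSubgroupOf Λ' with hK
  set Q := ↥Λ' ⧸ K with hQ
  have hsound : ∀ a b' : ↥Λ',
      (QuotientAddGroup.leftRel K) a b' → g a = g b' := by
    intro a b' hab
    rw [QuotientAddGroup.leftRel_apply] at hab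
    have h1 : ((-a + b' : ↥Λ') : V2) ∈ H := AddSubgroup.mem_addSubgroupOf.mp hab
    have h2 : (a : V2) - (b' : V2) ∈ H := by
      have h4 : -((-a + b' : ↥Λ') : V2) = (a : V2) - (b' : V2) := by push_cast; abel
      rw [← h4]; exact H.neg_mem h1
    exact hg_eq a b' h2
  set gq : Q → Set V2 := fun q => Quotient.liftOn' q g hsound with hgq
  have hgq_mk : ∀ m : ↥Λ', gq (QuotientAddGroup.mk m) = g m := fun m => rfl
  have hgq_inj : Function.Injective gq := by
    intro q1 q2 h
    induction q1 using QuotientAddGroup.induction_on with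
    | H a =>
    induction q2 using QuotientAddGroup.induction_on with
    | H b' =>
    rw [hgq_mk, hgq_mk] at h
    have := hg_inj a b' h
    rw [QuotientAddGroup.eq]
    refine AddSubgroup.mem_addSubgroupOf.mpr ?_
    have h4 : ((-a + b' : ↥Λ') : V2) = -((a : V2) - (b' : V2)) := by push_cast; abel
    rw [h4]; exact H.neg_mem this
  have hgq_range : Set.range gq = S := by
    rw [hS_range]
    ext O
    constructor
    · rintro ⟨q, rfl⟩
      induction q using QuotientAddGroup.induction_on with
      | H a => exact ⟨a, rfl⟩
    · rintro ⟨m, rfl⟩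
      exact ⟨QuotientAddGroup.mk m, rfl⟩
  have e : Q ≃ S := by
    refine Equiv.ofBijective (fun q => ⟨gq q, by rw [← hgq_range]; exact ⟨q, rfl⟩⟩) ⟨?_, ?_⟩
    · intro q1 q2 h
      exact hgq_inj (congrArg Subtype.val h)
    · rintro ⟨O, hO⟩
      rw [← hgq_range] at hO
      obtain ⟨q, hq⟩ := hO
      exact ⟨q, Subtype.ext hq⟩
  have hcard : Nat.card S = K.index := by
    rw [← Nat.card_congr e]
    rfl
  have hsH : Submodule.span ℝ (H : Set V2) = ⊤ := by
    rw [hH]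
    have : ⇑A '' (Λ : Set V2) = ⇑A.toLinearMap '' (Λ : Set V2) := rfl
    rw [this, ← Submodule.map_span, hΛ.2, Submodule.map_top, LinearMap.range_eq_top]
    exact A.surjective
  have hne : K.index ≠ 0 := aux_index_ne_zero Λ' H hΛ'.1 hΛ'.2 hsH hHle
  have hfinQ : Finite Q := by
    apply Nat.finite_of_card_ne_zero
    have : Nat.card Q = K.index := rfl
    rw [this]; exact hne
  have hfinS : S.Finite := by
    rw [← Set.finite_coe_iff]
    exact Finite.of_equiv Q e
  exact ⟨hfinS, by rw [← Nat.card_coe_set_eq, hcard]⟩
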